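/- Let X and Y be Banach spaces. If X and Y are both δ-average rough for some δ > 0, then X ⊕_∞ Y (the direct sum equipped with the norm ‖(x,y)‖ = max{‖x‖,‖y‖}) is δ-average rough. -/

import Mathlib

open Filter Topology

noncomputable section

/-- A Banach space `X` is `δ`-average rough if for every finite family of unit vectors
`x₁, …, xₙ`, one has `limsup_{‖y‖→0} (1/n) ∑ᵢ (‖xᵢ+y‖+‖xᵢ-y‖-2)/‖y‖ ≥ δ`. -/
def AverageRough (X : Type*) [NormedAddCommGroup X] [NormedSpace ℝ X] (δ : ℝ) : Prop :=
  ∀ n : ℕ, 0 < n → ∀ x : Fin n → X, (∀ i, ‖x i‖ = 1) →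
    δ ≤ Filter.limsup
      (fun y : X => (1 / (n : ℝ)) * ∑ i, (‖x i + y‖ + ‖x i - y‖ - 2) / ‖y‖) (𝓝[≠] 0)

theorem slope_mono {X : Type*} [NormedAddCommGroup X] [NormedSpace ℝ X] (x u : X) (hx : ‖x‖ = 1)
    {c : ℝ} (hc : 1 ≤ c) :
    c * (‖x + u‖ + ‖x - u‖ - 2) ≤ ‖x + c • u‖ + ‖x - c • u‖ - 2 := by
  have hc0 : 0 < c := lt_of_lt_of_le one_pos hc
  have hcne : c ≠ 0 := ne_of_gt hc0
  have hinv : 1 / c ≤ 1 := by rw [one_div]; exact inv_le_one_of_one_le₀ hc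
  have e1 : x + u = (1/c) • (x + c • u) + (1 - 1/c) • x := by
    rw [smul_add, smul_smul, one_div, inv_mul_cancel₀ hcne]
    module
  have e2 : x - u = (1/c) • (x - c • u) + (1 - 1/c) • x := by
    rw [smul_sub, smul_smul, one_div, inv_mul_cancel₀ hcne]
    module
  have h1 : ‖x + u‖ ≤ (1/c) * ‖x + c • u‖ + (1 - 1/c) := by
    calc ‖x + u‖ ≤ ‖(1/c) • (x + c • u)‖ + ‖(1 - 1/c) • x‖ := by rw [e1]; exact norm_add_le _ _
    _ = (1/c) * ‖x + c • u‖ + (1 - 1/c) := by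
        rw [norm_smul, norm_smul, hx, Real.norm_eq_abs, Real.norm_eq_abs,
          abs_of_pos (by positivity), abs_of_nonneg (by linarith)]
        ring
  have h2 : ‖x - u‖ ≤ (1/c) * ‖x - c • u‖ + (1 - 1/c) := by
    calc ‖x - u‖ ≤ ‖(1/c) • (x - c • u)‖ + ‖(1 - 1/c) • x‖ := by rw [e2]; exact norm_add_le _ _
    _ = (1/c) * ‖x - c • u‖ + (1 - 1/c) := by
        rw [norm_smul, norm_smul, hx, Real.norm_eq_abs, Real.norm_eq_abs,
          abs_of_pos (by positivity), abs_of_nonneg (by linarith)]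
        ring
  have h3 := add_le_add h1 h2
  have h4 := mul_le_mul_of_nonneg_left h3 (le_of_lt hc0)
  have : c * (1 / c * ‖x + c • u‖ + (1 - 1 / c) + (1 / c * ‖x - c • u‖ + (1 - 1 / c)))
      = ‖x + c • u‖ + ‖x - c • u‖ + 2 * (c - 1) := by field_simp; ring
  rw [this] at h4
  linarith

theorem key {X : Type*} [NormedAddCommGroup X] [NormedSpace ℝ X] {δ : ℝ}
    (hX : AverageRough X δ) {ε r : ℝ} (hε : 0 < ε) (hr : 0 < r)
    {n : ℕ} (x : Fin n → X) (A : Finset (Fin n)) (hA : A.Nonempty)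
    (hx : ∀ i ∈ A, ‖x i‖ = 1) :
    ∃ u : X, 0 < ‖u‖ ∧ ‖u‖ < r ∧
      (δ - ε) * A.card * ‖u‖ ≤ ∑ i ∈ A, (‖x i + u‖ + ‖x i - u‖ - 2) := by
  classical
  obtain ⟨i₀, hi₀⟩ := hA
  have hnx : Nontrivial X := nontrivial_of_ne (x i₀) 0
    (by intro h; have := hx i₀ hi₀; rw [h, norm_zero] at this; norm_num at this)
  set a := A.card with ha
  have ha0 : 0 < a := Finset.card_pos.mpr ⟨i₀, hi₀⟩
  have ha0' : (0:ℝ) < a := by exact_mod_cast ha0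
  let e : ↥A ≃ Fin a := Fintype.equivFinOfCardEq (Fintype.card_coe A)
  let x' : Fin a → X := fun j => x (e.symm j : Fin n)
  have hx' : ∀ j, ‖x' j‖ = 1 := fun j => hx _ (e.symm j).2
  have hls := hX a ha0 x' hx'
  -- the function
  set F : X → ℝ := fun y => (1 / (a : ℝ)) * ∑ j, (‖x' j + y‖ + ‖x' j - y‖ - 2) / ‖y‖ with hF
  have hbdd : ∀ᶠ y in 𝓝[≠] (0:X), -2 ≤ F y := by
    filter_upwards [self_mem_nhdsWithin] with y hy
    have hy0 : 0 < ‖y‖ := norm_pos_iff.mpr hy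
    have hterm : ∀ j : Fin a, -2 ≤ (‖x' j + y‖ + ‖x' j - y‖ - 2) / ‖y‖ := by
      intro j
      rw [le_div_iff₀ hy0]
      have h1 : ‖x' j‖ - ‖y‖ ≤ ‖x' j + y‖ := by
        have := norm_add_le (x' j + y) (-y); simp at this; linarith
      have h2 : ‖x' j‖ - ‖y‖ ≤ ‖x' j - y‖ := by
        have := norm_add_le (x' j - y) y; simp at this; linarith
      have := hx' j
      nlinarith
    calc (-2:ℝ) = (1/(a:ℝ)) * ∑ _j : Fin a, (-2:ℝ) := by
          rw [Finset.sum_const]; simp; field_simp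
      _ ≤ F y := by
          rw [hF]
          apply mul_le_mul_of_nonneg_left _ (by positivity)
          exact Finset.sum_le_sum (fun j _ => hterm j)
  have hcob : IsCoboundedUnder (· ≤ ·) (𝓝[≠] (0:X)) F :=
    IsBoundedUnder.isCoboundedUnder_le ⟨-2, by simpa using hbdd⟩
  have hfreq : ∃ᶠ y in 𝓝[≠] (0:X), δ - ε < F y :=
    frequently_lt_of_lt_limsup hcob (lt_of_lt_of_le (by linarith) hls)
  have hev : ∀ᶠ y in 𝓝[≠] (0:X), ‖y‖ < r ∧ y ≠ 0 := by
    filter_upwards [self_mem_nhdsWithin,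
      nhdsWithin_le_nhds (Metric.ball_mem_nhds (0:X) hr)] with y h1 h2
    exact ⟨by simpa [dist_eq_norm] using h2, h1⟩
  obtain ⟨u, hu1, hu2, hu3⟩ := (hfreq.and_eventually hev).exists
  have hu0 : 0 < ‖u‖ := norm_pos_iff.mpr hu3
  refine ⟨u, hu0, hu2, ?_⟩
  -- convert sum over Fin a to sum over A
  have hsum : ∑ j : Fin a, (‖x' j + u‖ + ‖x' j - u‖ - 2)
      = ∑ i ∈ A, (‖x i + u‖ + ‖x i - u‖ - 2) := by
    rw [← Finset.sum_coe_sort A (fun i => (‖x i + u‖ + ‖x i - u‖ - 2))]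
    exact (Equiv.sum_comp e.symm (fun i : ↥A => (‖x (i:Fin n) + u‖ + ‖x (i:Fin n) - u‖ - 2))).symm ▸ rfl
  have hF' : F u = (1/(a:ℝ)) * ((∑ i ∈ A, (‖x i + u‖ + ‖x i - u‖ - 2)) / ‖u‖) := by
    simp only [hF]
    rw [← Finset.sum_div, hsum]
  rw [hF'] at hu1
  generalize hS : ∑ i ∈ A, (‖x i + u‖ + ‖x i - u‖ - 2) = S at hu1 ⊢
  have h := mul_lt_mul_of_pos_right hu1 (mul_pos ha0' hu0)
  have heq : 1/(a:ℝ) * (S / ‖u‖) * ((a:ℝ)*‖u‖) = S := by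
    have e1 : 1/(a:ℝ) * (S / ‖u‖) * ((a:ℝ)*‖u‖) = S * (((a:ℝ))⁻¹ * (a:ℝ)) * ((‖u‖)⁻¹ * ‖u‖) := by
      ring
    rw [e1, inv_mul_cancel₀ (ne_of_gt ha0'), inv_mul_cancel₀ (ne_of_gt hu0), mul_one, mul_one]
  rw [heq] at h
  linarith

theorem keyAt {X : Type*} [NormedAddCommGroup X] [NormedSpace ℝ X] {δ : ℝ}
    (hX : AverageRough X δ) {ε s : ℝ} (hε : 0 < ε) (hs : 0 < s)
    {n : ℕ} (x : Fin n → X) (A : Finset (Fin n)) (hA : A.Nonempty)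
    (hx : ∀ i ∈ A, ‖x i‖ = 1) :
    ∃ u : X, ‖u‖ = s ∧
      (δ - ε) * A.card * s ≤ ∑ i ∈ A, (‖x i + u‖ + ‖x i - u‖ - 2) := by
  obtain ⟨v, hv0, hvs, hvsum⟩ := key hX hε hs x A hA hx
  set c : ℝ := s / ‖v‖ with hc
  have hc1 : 1 ≤ c := (one_le_div hv0).mpr (le_of_lt hvs)
  have hc0 : 0 < c := lt_of_lt_of_le one_pos hc1
  refine ⟨c • v, ?_, ?_⟩
  · rw [norm_smul, Real.norm_eq_abs, abs_of_pos hc0, hc, div_mul_cancel₀ _ (ne_of_gt hv0)]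
  · have h1 : ∀ i ∈ A, c * (‖x i + v‖ + ‖x i - v‖ - 2) ≤ ‖x i + c • v‖ + ‖x i - c • v‖ - 2 :=
      fun i hi => slope_mono (x i) v (hx i hi) hc1
    have h2 : c * ∑ i ∈ A, (‖x i + v‖ + ‖x i - v‖ - 2)
        ≤ ∑ i ∈ A, (‖x i + c • v‖ + ‖x i - c • v‖ - 2) := by
      rw [Finset.mul_sum]; exact Finset.sum_le_sum h1
    have h3 : c * ((δ - ε) * A.card * ‖v‖) ≤ c * ∑ i ∈ A, (‖x i + v‖ + ‖x i - v‖ - 2) :=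
      mul_le_mul_of_nonneg_left hvsum (le_of_lt hc0)
    have h4 : c * ((δ - ε) * A.card * ‖v‖) = (δ - ε) * A.card * s := by
      rw [hc]; field_simp
    linarith

/-- If `X` and `Y` are `δ`-average rough, then `X ⊕_∞ Y` is `δ`-average rough. -/
theorem averageRough_prod_linfty (X Y : Type*)
    [NormedAddCommGroup X] [NormedSpace ℝ X] [CompleteSpace X]
    [NormedAddCommGroup Y] [NormedSpace ℝ Y] [CompleteSpace Y]
    (δ : ℝ) (hδ : 0 < δ) (hX : AverageRough X δ) (hY : AverageRough Y δ) :
    AverageRough (WithLp ⊤ (X × Y)) δ := by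
  classical
  intro n hn z hz
  have hn' : (0:ℝ) < n := by exact_mod_cast hn
  set G : WithLp ⊤ (X × Y) → ℝ :=
    fun y => (1 / (n : ℝ)) * ∑ i, (‖z i + y‖ + ‖z i - y‖ - 2) / ‖y‖ with hG
  have hbdd : IsBoundedUnder (· ≤ ·) (𝓝[≠] (0 : WithLp ⊤ (X × Y))) G := by
    refine ⟨2, ?_⟩
    simp only [eventually_map]
    filter_upwards [self_mem_nhdsWithin] with w hw
    have hw0 : 0 < ‖w‖ := norm_pos_iff.mpr hw
    have hterm : ∀ i, (‖z i + w‖ + ‖z i - w‖ - 2) / ‖w‖ ≤ 2 := by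
      intro i
      rw [div_le_iff₀ hw0]
      have h1 : ‖z i + w‖ ≤ 1 + ‖w‖ := by
        have := norm_add_le (z i) w; rw [hz i] at this; linarith
      have h2 : ‖z i - w‖ ≤ 1 + ‖w‖ := by
        have := norm_sub_le (z i) w; rw [hz i] at this; linarith
      linarith
    calc G w ≤ (1 / (n:ℝ)) * ∑ _i : Fin n, (2:ℝ) := by
          rw [hG]
          exact mul_le_mul_of_nonneg_left (Finset.sum_le_sum fun i _ => hterm i) (by positivity)
      _ = 2 := by rw [Finset.sum_const]; simp; field_simp
  suffices h : ∀ ε > 0, δ - ε ≤ limsup G (𝓝[≠] (0 : WithLp ⊤ (X × Y))) by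
    by_contra hcon
    push_neg at hcon
    have := h ((δ - limsup G (𝓝[≠] (0 : WithLp ⊤ (X × Y)))) / 2) (by linarith)
    linarith
  intro ε hε
  refine le_limsup_of_frequently_le ?_ hbdd
  rw [frequently_iff]
  intro U hU
  obtain ⟨r, hr, hrU⟩ := Metric.mem_nhdsWithin_iff.mp hU
  set A : Finset (Fin n) := Finset.univ.filter (fun i => ‖(z i).fst‖ = 1) with hA
  have hzA : ∀ i ∈ A, ‖(z i).fst‖ = 1 := by
    intro i hi; rw [hA, Finset.mem_filter] at hi; exact hi.2
  have hzmax : ∀ i, max ‖(z i).fst‖ ‖(z i).snd‖ = 1 := by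
    intro i
    have := hz i
    rw [WithLp.prod_norm_eq_sup] at this
    exact this
  have hzB : ∀ i ∈ Aᶜ, ‖(z i).snd‖ = 1 := by
    intro i hi
    rw [Finset.mem_compl, hA, Finset.mem_filter] at hi
    push_neg at hi
    have h1 := hi (Finset.mem_univ i)
    rcases max_cases ‖(z i).fst‖ ‖(z i).snd‖ with ⟨he, _⟩ | ⟨he, _⟩
    · exact absurd (he ▸ hzmax i) h1
    · exact he ▸ hzmax i
  obtain ⟨u, v, hs0, hsr, hAsum, hBsum⟩ :
      ∃ (u : X) (v : Y), 0 < max ‖u‖ ‖v‖ ∧ max ‖u‖ ‖v‖ < r ∧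
        (δ - ε) * A.card * (max ‖u‖ ‖v‖) ≤ ∑ i ∈ A, (‖(z i).fst + u‖ + ‖(z i).fst - u‖ - 2) ∧
        (δ - ε) * Aᶜ.card * (max ‖u‖ ‖v‖) ≤ ∑ i ∈ Aᶜ, (‖(z i).snd + v‖ + ‖(z i).snd - v‖ - 2) := by
    by_cases hAne : A.Nonempty
    · obtain ⟨u, hu0, hur, husum⟩ := key hX hε hr (fun i => (z i).fst) A hAne hzA
      by_cases hBne : (Aᶜ : Finset (Fin n)).Nonempty
      · obtain ⟨v, hvn, hvsum⟩ := keyAt hY hε hu0 (fun i => (z i).snd) Aᶜ hBne hzB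
        refine ⟨u, v, ?_, ?_, ?_, ?_⟩ <;> rw [hvn, max_self]
        · exact hu0
        · exact hur
        · exact husum
        · exact hvsum
      · refine ⟨u, 0, ?_, ?_, ?_, ?_⟩ <;>
          rw [norm_zero, max_eq_left (norm_nonneg u)]
        · exact hu0
        · exact hur
        · exact husum
        · rw [Finset.not_nonempty_iff_eq_empty] at hBne
          rw [hBne]
          simp
    · rw [Finset.not_nonempty_iff_eq_empty] at hAne
      have hBne : (Aᶜ : Finset (Fin n)).Nonempty := by
        rw [hAne, Finset.compl_empty]
        exact Finset.univ_nonempty_iff.mpr (Fin.pos_iff_nonempty.mp hn)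
      obtain ⟨v, hv0, hvr, hvsum⟩ := key hY hε hr (fun i => (z i).snd) Aᶜ hBne hzB
      refine ⟨0, v, ?_, ?_, ?_, ?_⟩ <;>
        rw [norm_zero, max_eq_right (norm_nonneg v)]
      · exact hv0
      · exact hvr
      · rw [hAne]; simp
      · exact hvsum
  set w : WithLp ⊤ (X × Y) := (WithLp.equiv ⊤ (X × Y)).symm (u, v) with hw
  have hwnorm : ‖w‖ = max ‖u‖ ‖v‖ := rfl
  have hw0 : 0 < ‖w‖ := hwnorm ▸ hs0
  have hwne : w ≠ 0 := norm_pos_iff.mp hw0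
  refine ⟨w, hrU ⟨?_, hwne⟩, ?_⟩
  · rw [Metric.mem_ball, dist_zero_right, hwnorm]; exact hsr
  -- now the main estimate
  have hfst : ∀ i, ‖(z i).fst + u‖ ≤ ‖z i + w‖ := by
    intro i
    rw [WithLp.prod_norm_eq_sup]
    exact le_max_left _ _
  have hfst' : ∀ i, ‖(z i).fst - u‖ ≤ ‖z i - w‖ := by
    intro i
    rw [WithLp.prod_norm_eq_sup]
    exact le_max_left _ _
  have hsnd : ∀ i, ‖(z i).snd + v‖ ≤ ‖z i + w‖ := by
    intro i
    rw [WithLp.prod_norm_eq_sup]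
    exact le_max_right _ _
  have hsnd' : ∀ i, ‖(z i).snd - v‖ ≤ ‖z i - w‖ := by
    intro i
    rw [WithLp.prod_norm_eq_sup]
    exact le_max_right _ _
  rw [← hwnorm] at hAsum hBsum
  have hAle : ∑ i ∈ A, (‖(z i).fst + u‖ + ‖(z i).fst - u‖ - 2) / ‖w‖
      ≤ ∑ i ∈ A, (‖z i + w‖ + ‖z i - w‖ - 2) / ‖w‖ := by
    refine Finset.sum_le_sum fun i _ => ?_
    gcongr
    · exact hfst i
    · exact hfst' i
  have hBle : ∑ i ∈ Aᶜ, (‖(z i).snd + v‖ + ‖(z i).snd - v‖ - 2) / ‖w‖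
      ≤ ∑ i ∈ Aᶜ, (‖z i + w‖ + ‖z i - w‖ - 2) / ‖w‖ := by
    refine Finset.sum_le_sum fun i _ => ?_
    gcongr
    · exact hsnd i
    · exact hsnd' i
  have hA2 : (δ - ε) * A.card ≤ ∑ i ∈ A, (‖z i + w‖ + ‖z i - w‖ - 2) / ‖w‖ := by
    calc (δ - ε) * A.card
        ≤ (∑ i ∈ A, (‖(z i).fst + u‖ + ‖(z i).fst - u‖ - 2)) / ‖w‖ := by
          rw [le_div_iff₀ hw0]; exact hAsum
      _ = ∑ i ∈ A, (‖(z i).fst + u‖ + ‖(z i).fst - u‖ - 2) / ‖w‖ := Finset.sum_div _ _ _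
      _ ≤ _ := hAle
  have hB2 : (δ - ε) * Aᶜ.card ≤ ∑ i ∈ Aᶜ, (‖z i + w‖ + ‖z i - w‖ - 2) / ‖w‖ := by
    calc (δ - ε) * Aᶜ.card
        ≤ (∑ i ∈ Aᶜ, (‖(z i).snd + v‖ + ‖(z i).snd - v‖ - 2)) / ‖w‖ := by
          rw [le_div_iff₀ hw0]; exact hBsum
      _ = ∑ i ∈ Aᶜ, (‖(z i).snd + v‖ + ‖(z i).snd - v‖ - 2) / ‖w‖ := Finset.sum_div _ _ _
      _ ≤ _ := hBle
  have hcard : (A.card : ℝ) + (Aᶜ.card : ℝ) = n := by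
    have h := Finset.card_add_card_compl A
    rw [Fintype.card_fin] at h
    exact_mod_cast h
  have htot : (δ - ε) * (n : ℝ) ≤ ∑ i, (‖z i + w‖ + ‖z i - w‖ - 2) / ‖w‖ := by
    rw [← Finset.sum_add_sum_compl A]
    calc (δ - ε) * (n : ℝ) = (δ - ε) * A.card + (δ - ε) * Aᶜ.card := by
          rw [← hcard]; ring
      _ ≤ _ := add_le_add hA2 hB2
  simp only [hG]
  calc δ - ε = (1 / (n : ℝ)) * ((δ - ε) * n) := by field_simp
    _ ≤ (1 / (n : ℝ)) * ∑ i, (‖z i + w‖ + ‖z i - w‖ - 2) / ‖w‖ :=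
        mul_le_mul_of_nonneg_left htot (by positivity)
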